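/- Let K be a field of characteristic different from 2 and 3, let E be the elliptic curve y² = g(x) with g(x) = x³ + a·x² + b·x + c nonsingular over K, and define f(x) = x⁴ + (4a/3)·x³ + 2b·x² + 4c·x + (4ac − b²)/3 (so that 3·f(x) = 2·g(x)·g″(x) − g′(x)² is the 3-division polynomial of E). Then f′(x) = 4·g(x), and for every affine point P = (x₀, y₀) on E with y₀ ≠ 0 (so that [2]P ≠ O), the point [2]P is affine with x-coordinate x([2]P) = x₀ − 3·f(x₀)/f′(x₀). In other words, the Lattès map of P¹ induced by duplication on E is the modified Newton–Raphson map x ↦ x − 3·f(x)/f′(x) of the degree-4 polynomial f whose roots are the x-coordinates of the 3-torsion points of E. -/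

import Mathlib

open Polynomial

/-- **The Lattès map of duplication is a modified Newton–Raphson map.**
Let `K` be a field of characteristic `≠ 2, 3`, `E : y² = g(x)` with
`g = x³ + a·x² + b·x + c` nonsingular, and
`f = x⁴ + (4a/3)x³ + 2b·x² + 4c·x + (4ac − b²)/3` (so `3f = 2gg'' − g'²` is the
3-division polynomial).  Then `f' = 4g`, and for every affine point `(x₀, y₀)` on `E`
with `y₀ ≠ 0`, the `x`-coordinate `λ² − a − 2x₀` of `[2](x₀,y₀)` (where `λ = g'(x₀)/(2y₀)`)
equals `x₀ − 3·f(x₀)/f'(x₀)`. -/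
theorem lattes_duplication_is_modified_newton
    {K : Type*} [Field K] (h2 : (2 : K) ≠ 0) (h3 : (3 : K) ≠ 0)
    (a b c : K) (g f : K[X])
    (hg : g = X ^ 3 + C a * X ^ 2 + C b * X + C c)
    (hns : Squarefree g)
    (hf : f = X ^ 4 + C (4 * a / 3) * X ^ 3 + C (2 * b) * X ^ 2 + C (4 * c) * X
            + C ((4 * a * c - b ^ 2) / 3)) :
    (C (3 : K) * f = C 2 * g * derivative (derivative g) - (derivative g) ^ 2) ∧
    (derivative f = C 4 * g) ∧
    (∀ x₀ y₀ : K, y₀ ^ 2 = g.eval x₀ → y₀ ≠ 0 →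
      ((derivative g).eval x₀ / (2 * y₀)) ^ 2 - a - 2 * x₀
        = x₀ - 3 * f.eval x₀ / (derivative f).eval x₀) := by
  have ht : (3 : K[X]) * C ((3:K)⁻¹) = 1 := by
    rw [show (3 : K[X]) = C (3:K) from (map_ofNat C 3).symm, ← C_mul,
      mul_inv_cancel₀ h3, C_1]
  have hc1 : C ((4:K) * a / 3) = 4 * C a * C ((3:K)⁻¹) := by
    rw [show (4 : K[X]) = C (4:K) from (map_ofNat C 4).symm, ← C_mul, ← C_mul]
    congr 1; field_simp
  have hc2 : C (((4:K) * a * c - b ^ 2) / 3) = (4 * C a * C c - C b ^ 2) * C ((3:K)⁻¹) := by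
    rw [show (4 : K[X]) = C (4:K) from (map_ofNat C 4).symm, ← C_pow, ← C_mul, ← C_mul,
      ← C_sub, ← C_mul]
    congr 1; field_simp
  have hc3 : C ((2:K) * b) = 2 * C b := by
    rw [show (2 : K[X]) = C (2:K) from (map_ofNat C 2).symm, ← C_mul]
  have hc4 : C ((4:K) * c) = 4 * C c := by
    rw [show (4 : K[X]) = C (4:K) from (map_ofNat C 4).symm, ← C_mul]
  have hf2 : f = X ^ 4 + 4 * C a * C ((3:K)⁻¹) * X ^ 3 + 2 * C b * X ^ 2
      + 4 * C c * X + (4 * C a * C c - C b ^ 2) * C ((3:K)⁻¹) := by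
    rw [hf, hc1, hc2, hc3, hc4]
  have hg' : derivative g = 3 * X ^ 2 + 2 * C a * X + C b := by
    rw [hg]; simp [derivative_pow, map_ofNat]; ring
  have hg'' : derivative (derivative g) = 6 * X + 2 * C a := by
    rw [hg']; simp [map_ofNat]; ring
  have hf' : derivative f = 4 * X ^ 3 + 3 * (4 * C a * C ((3:K)⁻¹)) * X ^ 2
      + 2 * (2 * C b) * X + 4 * C c := by
    rw [hf2]; simp [derivative_pow, map_ofNat]; ring
  have key1 : C (3 : K) * f = C 2 * g * derivative (derivative g) - (derivative g) ^ 2 := by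
    rw [hf2, hg'', hg', hg, map_ofNat, map_ofNat]
    linear_combination (X ^ 3 * (4 * C a) + 4 * C a * C c - C b ^ 2) * ht
  have key2 : derivative f = C 4 * g := by
    rw [hf', hg, map_ofNat]
    linear_combination (4 * C a * X ^ 2) * ht
  refine ⟨key1, key2, fun x₀ y₀ hy hy0 => ?_⟩
  have e1 : (derivative f).eval x₀ = 4 * (y₀ ^ 2) := by
    rw [key2, hy]; simp
  have e2 : 3 * f.eval x₀ = 2 * y₀ ^ 2 * ((derivative (derivative g)).eval x₀)
      - ((derivative g).eval x₀) ^ 2 := by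
    have := congrArg (eval x₀) key1
    simpa [hy] using this
  rw [e1]
  have h4 : (4 : K) ≠ 0 := by
    have : (4 : K) = 2 * 2 := by norm_num
    rw [this]; exact mul_ne_zero h2 h2
  have eg'' : (derivative (derivative g)).eval x₀ = 6 * x₀ + 2 * a := by
    rw [hg'']; simp
  rw [eg''] at e2
  field_simp
  linear_combination 4 * e2
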